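/- (Atkinson factorization) Let (A,P) be a complete filtered Rota–Baxter algebra of weight 1 and b ∈ A_1. If x and x' are the unique solutions in 1+A_1 of x = 1 − P(xb) and x' = 1 − P̃(bx') (P̃ = id − P), then x(1+b)x' = 1; equivalently 1 + b = x^{-1}(x')^{-1}. If P is idempotent, this factorization of 1+b into a factor in 1 + P(A_1) times a factor in 1 + P̃(A_1) is unique. -/

import Mathlib

open scoped BigOperators

noncomputable def expS (K : Type*) {A : Type*} [Field K] [CharZero K] [Ring A] [Algebra K A]
    [UniformSpace A] (a : A) : A :=
  ∑' n : ℕ, ((n.factorial : K)⁻¹) • a ^ n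

noncomputable def logS (K : Type*) {A : Type*} [Field K] [CharZero K] [Ring A] [Algebra K A]
    [UniformSpace A] (a : A) : A :=
  ∑' n : ℕ, (((-1 : K) ^ n) * ((n : K) + 1)⁻¹) • (a - 1) ^ (n + 1)

noncomputable def BCHs (K : Type*) {A : Type*} [Field K] [CharZero K] [Ring A] [Algebra K A]
    [UniformSpace A] (x y : A) : A :=
  logS K (expS K x * expS K y) - x - y

/-- A complete decreasing multiplicative filtration defining the topology of `A`. -/
def IsCompleteFiltration (K : Type*) {A : Type*} [Field K] [CharZero K] [Ring A] [Algebra K A]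
    [UniformSpace A] (F : ℕ → Submodule K A) : Prop :=
  F 0 = ⊤ ∧ (∀ n, F (n + 1) ≤ F n) ∧
    (∀ m n : ℕ, ∀ x ∈ F m, ∀ y ∈ F n, x * y ∈ F (m + n)) ∧
    (∀ n, IsOpen ((F n : Set A))) ∧
    (∀ U ∈ nhds (0 : A), ∃ n, ((F n : Set A)) ⊆ U)

variable {K : Type*} [Field K] [CharZero K] {A : Type*} [Ring A] [Algebra K A]
  [UniformSpace A] [CompleteSpace A] [T2Space A] [IsTopologicalRing A]
  [IsUniformAddGroup A]

theorem stmt17 (F : ℕ → Submodule K A) (hF : IsCompleteFiltration K F)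
    (P : A →ₗ[K] A) (hP : ∀ n, ∀ x ∈ F n, P x ∈ F n)
    (hRB : ∀ x y : A, P x * P y + P (x * y) = P (x * P y) + P (P x * y))
    (b : A) (hb : b ∈ F 1) (x x' : A)
    (hx : x = 1 - P (x * b)) (hx' : x' = 1 - (b * x' - P (b * x'))) :
    x * (1 + b) * x' = 1 ∧
    ((∀ w : A, P (P w) = P w) →
      ∀ u v u' v' : A,
        (∃ w ∈ F 1, u = 1 + P w) → (∃ w ∈ F 1, v = 1 + (w - P w)) →
        (∃ w ∈ F 1, u' = 1 + P w) → (∃ w ∈ F 1, v' = 1 + (w - P w)) →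
        u * v = 1 + b → u' * v' = 1 + b → u = u' ∧ v = v') := by

  constructor
  · -- Atkinson factorization
    have hPx : P (x * b) = 1 - x := by nth_rewrite 2 [hx]; abel
    have eP : P (b * x') = x' - 1 + b * x' := by nth_rewrite 2 [hx']; abel
    have key1 : (1 + b) * x' = 1 + P (b * x') := by rw [eP]; noncomm_ring
    have hRB' := hRB (x * b) (b * x')
    have e2 : (x * b) * P (b * x') = x * (b * x') - x * b + (x * b) * (b * x') := by
      rw [eP]; noncomm_ring
    have e3 : P (x * b) * (b * x') = b * x' - x * (b * x') := by
      rw [hPx]; noncomm_ring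
    rw [e2, e3, map_sub, map_add, map_sub] at hRB'
    have hmul : P (x * b) * P (b * x') = P (b * x') - P (x * b) := by
      calc P (x * b) * P (b * x')
          = (P (x * b) * P (b * x') + P (x * b * (b * x'))) - P (x * b * (b * x')) := by abel
        _ = (P (x * (b * x')) - P (x * b) + P (x * b * (b * x'))
              + (P (b * x') - P (x * (b * x')))) - P (x * b * (b * x')) := by rw [hRB']
        _ = P (b * x') - P (x * b) := by abel
    have key2 : x * P (b * x') = P (x * b) := by
      nth_rewrite 1 [hx]
      rw [sub_mul, one_mul, hmul]; abel
    calc x * (1 + b) * x' = x * ((1 + b) * x') := by rw [mul_assoc]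
      _ = x * (1 + P (b * x')) := by rw [key1]
      _ = x + x * P (b * x') := by noncomm_ring
      _ = x + P (x * b) := by rw [key2]
      _ = 1 := by nth_rewrite 1 [hx]; abel
  · rintro hid u v u' v' ⟨w1, hw1, rfl⟩ ⟨w2, hw2, rfl⟩ ⟨w3, hw3, rfl⟩ ⟨w4, hw4, rfl⟩ huv hu'v'
    obtain ⟨hF0, hFmono, hFmul, hFopen, hFnhds⟩ := hF
    set p := P w1 with hpdef
    set q := w2 - P w2 with hqdef
    set p' := P w3 with hp'def
    set q' := w4 - P w4 with hq'def
    have hp : p ∈ F 1 := hP 1 w1 hw1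
    have hp' : p' ∈ F 1 := hP 1 w3 hw3
    have hq : q ∈ F 1 := Submodule.sub_mem _ hw2 (hP 1 w2 hw2)
    have hq' : q' ∈ F 1 := Submodule.sub_mem _ hw4 (hP 1 w4 hw4)
    have hPp : P p = p := hid w1
    have hPp' : P p' = p' := hid w3
    have hPq : P q = 0 := by rw [hqdef, map_sub, hid w2, sub_self]
    have hPq' : P q' = 0 := by rw [hq'def, map_sub, hid w4, sub_self]
    have hexp : ∀ a c : A, (1 + a) * (1 + c) = 1 + (a + c + a * c) := by
      intro a c; noncomm_ring
    have hE : p + q + p * q = p' + q' + p' * q' := by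
      have h : (1 + p) * (1 + q) = (1 + p') * (1 + q') := huv.trans hu'v'.symm
      rw [hexp, hexp] at h
      exact add_left_cancel h
    have main : ∀ n : ℕ, (p - p') ∈ F (n + 1) ∧ (q - q') ∈ F (n + 1) := by
      intro n
      induction n with
      | zero => exact ⟨Submodule.sub_mem _ hp hp', Submodule.sub_mem _ hq hq'⟩
      | succ n ih =>
        obtain ⟨ihp, ihq⟩ := ih
        have hd : p' * q' - p * q ∈ F (n + 2) := by
          have hsplit : p' * q' - p * q = p' * (q' - q) + (p' - p) * q := by noncomm_ring
          rw [hsplit]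
          refine Submodule.add_mem _ ?_ ?_
          · have h1 : p' * (q' - q) ∈ F (1 + (n + 1)) :=
              hFmul 1 (n + 1) p' hp' (q' - q) (by simpa using Submodule.neg_mem _ ihq)
            rw [Nat.add_comm 1 (n+1)] at h1; exact h1
          · exact hFmul (n + 1) 1 (p' - p) (by simpa using Submodule.neg_mem _ ihp) q hq
        have h' : p + P (p * q) = p' + P (p' * q') := by
          have h := congrArg P hE
          simp only [map_add, hPp, hPp', hPq, hPq', add_zero] at h
          exact h
        have hP1 : p - p' = P (p' * q' - p * q) := by
          calc p - p' = (p + P (p * q)) - P (p * q) - p' := by abel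
            _ = (p' + P (p' * q')) - P (p * q) - p' := by rw [h']
            _ = P (p' * q' - p * q) := by rw [map_sub]; abel
        have hpmem : p - p' ∈ F (n + 2) := by rw [hP1]; exact hP _ _ hd
        refine ⟨hpmem, ?_⟩
        have hq1 : q - q' = (p' - p) + (p' * q' - p * q) := by
          calc q - q' = (p + q + p * q) - p - p * q - q' := by abel
            _ = (p' + q' + p' * q') - p - p * q - q' := by rw [hE]
            _ = (p' - p) + (p' * q' - p * q) := by abel
        rw [hq1]
        exact Submodule.add_mem _ (by simpa using Submodule.neg_mem _ hpmem) hd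
    have hzero : ∀ z : A, (∀ n, z ∈ F (n + 1)) → z = 0 := by
      intro z hz
      by_contra hne
      obtain ⟨U, V, hU, hV, h0U, hzV, hUV⟩ := t2_separation (Ne.symm hne)
      obtain ⟨n, hn⟩ := hFnhds U (hU.mem_nhds h0U)
      have hzU : z ∈ U := hn (hFmono n (hz n))
      exact hUV.le_bot ⟨hzU, hzV⟩
    have hpp : p = p' := sub_eq_zero.mp (hzero (p - p') (fun n => (main n).1))
    have hqq : q = q' := sub_eq_zero.mp (hzero (q - q') (fun n => (main n).2))
    exact ⟨by rw [hpp], by rw [hqq]⟩
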